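/- Let λ ∈ (0,1) and let φ₁, φ₂ : [0,1] → ℝ be continuous. Define C_T as the T×T matrix with entries C_T(i,j;λ) as above, and the vectors 𝛗_k = (φ_k(1/T), …, φ_k(T/T))ᵀ for k = 1,2. Then as T → ∞, (1/T²) 𝛗₁ᵀ C_T 𝛗₂ converges to (1/λ²)∫₀^λ φ₁φ₂ − (1/λ³)(∫₀^λ φ₁)(∫₀^λ φ₂) + (1/(1−λ)²)∫_λ^1 φ₁φ₂ − (1/(1−λ)³)(∫_λ^1 φ₁)(∫_λ^1 φ₂), which equals ∫₀¹ φ̃₁(r;λ) φ̃₂(r;λ) dr for the demeaned-rescaled transforms φ̃_k. -/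

import Mathlib

set_option maxHeartbeats 1000000

open Matrix MeasureTheory Filter

section CT
/-- The T×T matrix C_T(·,·;λ) from the paper, with time points i/T for
i = 1, …, T (index `i : Fin T` corresponds to time (i+1)/T). -/
noncomputable def CTmatrix (T : ℕ) (lam : ℝ) : Matrix (Fin T) (Fin T) ℝ :=
  Matrix.of fun i j =>
    (if ((i : ℕ) + 1 : ℝ) / T ≤ lam ∧ ((j : ℕ) + 1 : ℝ) / T ≤ lam then
        ((if i = j then (T : ℝ) else 0) - 1 / lam) / lam ^ 2
      else 0)
    + (if lam < ((i : ℕ) + 1 : ℝ) / T ∧ lam < ((j : ℕ) + 1 : ℝ) / T then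
        ((if i = j then (T : ℝ) else 0) - 1 / (1 - lam)) / (1 - lam) ^ 2
      else 0)


section Aux


lemma riemann_cutoff (f : ℝ → ℝ) (hf : ContinuousOn f (Set.Icc 0 1))
    (μ : ℝ) (hμ0 : 0 < μ) (hμ1 : μ ≤ 1) :
    Tendsto (fun T : ℕ => (T:ℝ)⁻¹ * ∑ i : Fin T,
        (if ((i:ℕ)+1:ℝ)/T ≤ μ then f (((i:ℕ)+1:ℝ)/T) else 0)) atTop
      (nhds (∫ r in (0:ℝ)..μ, f r)) := by
  -- bound M ≥ 1
  obtain ⟨M0, hM0⟩ := (isCompact_Icc (a := (0:ℝ)) (b := 1)).exists_bound_of_continuousOn hf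
  set M := max M0 1 with hMdef
  have hM1 : (1:ℝ) ≤ M := le_max_right _ _
  have hM : ∀ x ∈ Set.Icc (0:ℝ) 1, |f x| ≤ M := fun x hx =>
    (hM0 x hx).trans (le_max_left _ _)
  have hMpos : (0:ℝ) < M := lt_of_lt_of_le one_pos hM1
  rw [Metric.tendsto_atTop]
  intro ε hε
  -- uniform continuity
  have huc := (isCompact_Icc (a := (0:ℝ)) (b := 1)).uniformContinuousOn_of_continuous hf
  rw [Metric.uniformContinuousOn_iff] at huc
  obtain ⟨δ, hδ, hucδ⟩ := huc (ε/3) (by positivity)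
  obtain ⟨T₀, hT₀⟩ := exists_nat_ge (max (1/δ) (3*M/ε) + 1)
  refine ⟨T₀, fun T hT => ?_⟩
  have hTr : (max (1/δ) (3*M/ε) + 1) ≤ (T:ℝ) := hT₀.trans (Nat.cast_le.2 hT)
  have hTpos : (0:ℝ) < T := lt_of_lt_of_le (by positivity) hTr
  have hTd : 1/(T:ℝ) < δ := by
    rw [div_lt_iff₀ hTpos]
    have h1 : 1/δ < (T:ℝ) := lt_of_lt_of_le (by
      calc (1:ℝ)/δ ≤ max (1/δ) (3*M/ε) := le_max_left _ _
      _ < max (1/δ) (3*M/ε) + 1 := by linarith) hTr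
    calc (1:ℝ) = δ * (1/δ) := by field_simp
    _ < δ * T := by exact mul_lt_mul_of_pos_left h1 hδ
    _ = δ * T := rfl
  have hTM : M/(T:ℝ) ≤ ε/3 := by
    rw [div_le_iff₀ hTpos]
    have h1 : 3*M/ε ≤ (T:ℝ) := by
      calc (3:ℝ)*M/ε ≤ max (1/δ) (3*M/ε) := le_max_right _ _
      _ ≤ (T:ℝ) := by linarith
    rw [div_le_iff₀ hε] at h1
    nlinarith
  set N := ⌊μ * T⌋₊ with hNdef
  have hNT : N ≤ T := by
    apply Nat.floor_le_of_le
    calc μ * T ≤ 1 * T := by nlinarith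
    _ = T := one_mul _
  have hNr : (N:ℝ) ≤ μ * T := Nat.floor_le (by positivity)
  have hNr2 : μ * T - 1 < (N:ℝ) := by
    have := Nat.lt_floor_add_one (μ * T)
    linarith
  clear_value N
  -- rewrite sum
  have hsum : ∑ i : Fin T, (if ((i:ℕ)+1:ℝ)/T ≤ μ then f (((i:ℕ)+1:ℝ)/T) else 0)
      = ∑ k ∈ Finset.range N, f ((k+1:ℝ)/T) := by
    rw [Fin.sum_univ_eq_sum_range (fun i => if ((i:ℕ)+1:ℝ)/T ≤ μ then f (((i:ℕ)+1:ℝ)/T) else 0) T]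
    rw [← Finset.sum_subset (Finset.range_subset_range.2 hNT)
      (f := fun i : ℕ => if ((i:ℕ)+1:ℝ)/T ≤ μ then f (((i:ℕ)+1:ℝ)/T) else 0)]
    · apply Finset.sum_congr rfl
      intro k hk
      rw [if_pos]
      rw [div_le_iff₀ hTpos]
      have hkN : (k:ℕ) + 1 ≤ N := Nat.succ_le_of_lt (Finset.mem_range.1 hk)
      calc ((k:ℝ)+1) = ((k+1 : ℕ) : ℝ) := by push_cast; ring
      _ ≤ (N:ℝ) := Nat.cast_le.2 hkN
      _ ≤ μ * T := hNr
    · intro x hx hx2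
      rw [if_neg]
      rw [Finset.mem_range, not_lt] at hx2
      rw [div_le_iff₀ hTpos]
      intro hcon
      have : μ * T < (N:ℝ) + 1 := by
        have := Nat.lt_succ_floor (μ * T)
        push_cast at this ⊢
        linarith [hNr2]
      have hxN : (N:ℝ) ≤ (x:ℝ) := Nat.cast_le.2 hx2
      linarith
  -- integrability on subintervals
  have hfi : ∀ a b : ℝ, a ∈ Set.Icc (0:ℝ) 1 → b ∈ Set.Icc (0:ℝ) 1 → IntervalIntegrable f volume a b := by
    intro a b ha hb
    exact (hf.mono (Set.uIcc_subset_Icc ha hb)).intervalIntegrable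
  have hmem : ∀ k : ℕ, k ≤ N → ((k:ℝ)/T) ∈ Set.Icc (0:ℝ) 1 := by
    intro k hk
    constructor
    · positivity
    · rw [div_le_one hTpos]
      calc (k:ℝ) ≤ (N:ℝ) := Nat.cast_le.2 hk
      _ ≤ μ * T := hNr
      _ ≤ T := by nlinarith
  have hNTle : (N:ℝ)/T ≤ μ := by rw [div_le_iff₀ hTpos]; exact hNr
  have hNT0 : (0:ℝ) ≤ (N:ℝ)/T := by positivity
  have hμmem : μ ∈ Set.Icc (0:ℝ) 1 := ⟨le_of_lt hμ0, hμ1⟩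
  have hadj : ∫ r in (0:ℝ)..((N:ℝ)/T), f r
      = ∑ k ∈ Finset.range N, ∫ r in ((k:ℝ)/T)..(((k:ℝ)+1)/T), f r := by
    have := intervalIntegral.sum_integral_adjacent_intervals
      (a := fun k : ℕ => (k:ℝ)/T) (μ := volume) (n := N) (f := f) ?_
    · rw [show (((0:ℕ):ℝ))/(T:ℝ) = (0:ℝ) by norm_num] at this
      rw [← this]
      apply Finset.sum_congr rfl
      intro k _
      push_cast
      ring_nf
    · intro k hk
      have h1 := hfi ((k:ℝ)/T) (((k+1:ℕ):ℝ)/T) (hmem k (le_of_lt hk)) (hmem (k+1) hk)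
      exact h1
  have hsplit : ∫ r in (0:ℝ)..μ, f r
      = (∫ r in (0:ℝ)..((N:ℝ)/T), f r) + ∫ r in ((N:ℝ)/T)..μ, f r := by
    rw [intervalIntegral.integral_add_adjacent_intervals
      (hfi _ _ ⟨le_refl _, by linarith⟩ (hmem N (le_refl _)))
      (hfi _ _ (hmem N (le_refl _)) hμmem)]
  have hterm : ∀ k ∈ Finset.range N,
      |(T:ℝ)⁻¹ * f (((k:ℝ)+1)/T) - ∫ r in ((k:ℝ)/T)..(((k:ℝ)+1)/T), f r| ≤ ε/3 * (T:ℝ)⁻¹ := by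
    intro k hk
    have hkN : (k:ℕ) + 1 ≤ N := Nat.succ_le_of_lt (Finset.mem_range.1 hk)
    have hk1mem : (((k:ℝ)+1)/T) ∈ Set.Icc (0:ℝ) 1 := by
      have := hmem (k+1) hkN
      push_cast at this
      exact this
    have hkmem : ((k:ℝ)/T) ∈ Set.Icc (0:ℝ) 1 := hmem k (le_trans (Nat.le_succ k) hkN)
    have hconst : (T:ℝ)⁻¹ * f (((k:ℝ)+1)/T)
        = ∫ _ in ((k:ℝ)/T)..(((k:ℝ)+1)/T), f (((k:ℝ)+1)/T) := by
      rw [intervalIntegral.integral_const, smul_eq_mul]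
      congr 1
      field_simp
      ring
    rw [hconst, ← intervalIntegral.integral_sub intervalIntegrable_const
      (hfi _ _ hkmem hk1mem)]
    have hle : (k:ℝ)/T ≤ ((k:ℝ)+1)/T := by
      rw [div_le_div_iff₀ hTpos hTpos]; nlinarith
    calc |∫ r in ((k:ℝ)/T)..(((k:ℝ)+1)/T), (f (((k:ℝ)+1)/T) - f r)|
        ≤ ε/3 * |((k:ℝ)+1)/T - (k:ℝ)/T| := by
          rw [← Real.norm_eq_abs]
          apply intervalIntegral.norm_integral_le_of_norm_le_const
          intro r hr
          rw [Set.uIoc_of_le hle] at hr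
          have hrmem : r ∈ Set.Icc (0:ℝ) 1 :=
            ⟨le_trans hkmem.1 (le_of_lt hr.1), le_trans hr.2 hk1mem.2⟩
          have hdist : dist (((k:ℝ)+1)/T) r < δ := by
            rw [Real.dist_eq, abs_of_nonneg (by linarith [hr.2] : (0:ℝ) ≤ ((k:ℝ)+1)/T - r)]
            have : ((k:ℝ)+1)/T - r < ((k:ℝ)+1)/T - (k:ℝ)/T := by linarith [hr.1]
            have h2 : ((k:ℝ)+1)/T - (k:ℝ)/T = 1/T := by field_simp; ring
            rw [h2] at this
            linarith
          have := hucδ _ hk1mem _ hrmem hdist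
          rw [Real.dist_eq] at this
          exact le_of_lt this
      _ = ε/3 * (T:ℝ)⁻¹ := by
          congr 1
          have h2 : ((k:ℝ)+1)/T - (k:ℝ)/T = 1/T := by field_simp; ring
          rw [h2, abs_of_pos (by positivity), one_div]
  have htail : |∫ r in ((N:ℝ)/T)..μ, f r| ≤ ε/3 := by
    calc |∫ r in ((N:ℝ)/T)..μ, f r| ≤ M * |μ - (N:ℝ)/T| := by
          rw [← Real.norm_eq_abs]
          apply intervalIntegral.norm_integral_le_of_norm_le_const
          intro r hr
          rw [Set.uIoc_of_le hNTle] at hr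
          exact hM r ⟨le_trans hNT0 (le_of_lt hr.1), le_trans hr.2 hμ1⟩
      _ ≤ M * (1/T) := by
          apply mul_le_mul_of_nonneg_left _ (le_of_lt hMpos)
          rw [abs_of_nonneg (by linarith)]
          have hNTT : (N:ℝ)/T * T = (N:ℝ) := by field_simp
          have h3 : (μ - (N:ℝ)/T) * T ≤ 1 := by nlinarith [hNr2]
          rw [sub_le_iff_le_add, ← add_div, le_div_iff₀ hTpos]
          nlinarith [hNr2]
      _ ≤ ε/3 := by rw [mul_one_div]; exact hTM
  rw [Real.dist_eq, hsum, hsplit, hadj]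
  have hrw : (T:ℝ)⁻¹ * ∑ k ∈ Finset.range N, f (((k:ℝ)+1)/T)
      = ∑ k ∈ Finset.range N, (T:ℝ)⁻¹ * f (((k:ℝ)+1)/T) := Finset.mul_sum _ _ _
  have final : |(T:ℝ)⁻¹ * (∑ k ∈ Finset.range N, f (((k:ℝ)+1)/T))
      - ((∑ k ∈ Finset.range N, ∫ r in ((k:ℝ)/T)..(((k:ℝ)+1)/T), f r)
        + ∫ r in ((N:ℝ)/T)..μ, f r)| < ε := by
    rw [hrw]
    have h1 : ∑ k ∈ Finset.range N, (T:ℝ)⁻¹ * f (((k:ℝ)+1)/T)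
        - ((∑ k ∈ Finset.range N, ∫ r in ((k:ℝ)/T)..(((k:ℝ)+1)/T), f r)
          + ∫ r in ((N:ℝ)/T)..μ, f r)
        = (∑ k ∈ Finset.range N,
            ((T:ℝ)⁻¹ * f (((k:ℝ)+1)/T) - ∫ r in ((k:ℝ)/T)..(((k:ℝ)+1)/T), f r))
          - ∫ r in ((N:ℝ)/T)..μ, f r := by
      rw [Finset.sum_sub_distrib]; ring
    rw [h1]
    calc |(∑ k ∈ Finset.range N,
            ((T:ℝ)⁻¹ * f (((k:ℝ)+1)/T) - ∫ r in ((k:ℝ)/T)..(((k:ℝ)+1)/T), f r))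
          - ∫ r in ((N:ℝ)/T)..μ, f r|
        ≤ |∑ k ∈ Finset.range N,
            ((T:ℝ)⁻¹ * f (((k:ℝ)+1)/T) - ∫ r in ((k:ℝ)/T)..(((k:ℝ)+1)/T), f r)|
          + |∫ r in ((N:ℝ)/T)..μ, f r| := abs_sub _ _
      _ ≤ (∑ k ∈ Finset.range N, |(T:ℝ)⁻¹ * f (((k:ℝ)+1)/T)
            - ∫ r in ((k:ℝ)/T)..(((k:ℝ)+1)/T), f r|) + ε/3 := by
          exact add_le_add (Finset.abs_sum_le_sum_abs _ _) htail
      _ ≤ (∑ _k ∈ Finset.range N, ε/3 * (T:ℝ)⁻¹) + ε/3 := by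
          gcongr with k hk
          exact hterm k hk
      _ = (N:ℝ) * (ε/3 * (T:ℝ)⁻¹) + ε/3 := by rw [Finset.sum_const, Finset.card_range]; push_cast; ring
      _ ≤ 1 * (ε/3) + ε/3 := by
          have hN1 : (N:ℝ) * (T:ℝ)⁻¹ ≤ 1 := by
            calc (N:ℝ) * (T:ℝ)⁻¹ = (N:ℝ)/T := by rw [div_eq_mul_inv]
            _ ≤ μ := hNTle
            _ ≤ 1 := hμ1
          nlinarith [le_of_lt hε]
      _ < ε := by linarith
  exact final


lemma double_sum_delta {n : ℕ} (ψ χ : Fin n → ℝ) (c cT : ℝ) :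
    ∑ i : Fin n, ∑ j : Fin n, ψ i * ((if i = j then cT else 0) - c) * χ j
      = cT * (∑ i : Fin n, ψ i * χ i) - c * (∑ i : Fin n, ψ i) * (∑ j : Fin n, χ j) := by
  have h1 : ∀ i : Fin n, ∑ j : Fin n, ψ i * ((if i = j then cT else 0) - c) * χ j
      = cT * (ψ i * χ i) - c * ψ i * (∑ j : Fin n, χ j) := by
    intro i
    have : ∀ j : Fin n, ψ i * ((if i = j then cT else 0) - c) * χ j
        = (if i = j then cT * (ψ i * χ j) else 0) - c * ψ i * χ j := by
      intro j; split_ifs <;> ring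
    rw [Finset.sum_congr rfl (fun j _ => this j), Finset.sum_sub_distrib,
      Finset.sum_ite_eq, if_pos (Finset.mem_univ i), ← Finset.mul_sum]
  rw [Finset.sum_congr rfl (fun i _ => h1 i), Finset.sum_sub_distrib, ← Finset.mul_sum,
    ← Finset.sum_mul, ← Finset.mul_sum]

lemma STot_tendsto (f : ℝ → ℝ) (hf : ContinuousOn f (Set.Icc 0 1)) :
    Filter.Tendsto (fun T : ℕ => (T:ℝ)⁻¹ * ∑ i : Fin T, f (((i:ℕ)+1:ℝ)/T)) Filter.atTop
      (nhds (∫ r in (0:ℝ)..1, f r)) := by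
  have h := riemann_cutoff f hf 1 one_pos (le_refl 1)
  refine h.congr (fun T => ?_)
  congr 1
  apply Finset.sum_congr rfl
  intro i _
  rw [if_pos]
  rcases Nat.eq_zero_or_pos T with h0 | h0
  · exact absurd i.2 (by omega)
  · have hTpos : (0:ℝ) < T := by exact_mod_cast h0
    rw [div_le_one hTpos]
    have hi := i.2
    have : ((i:ℕ) + 1 : ℕ) ≤ T := hi
    calc ((i:ℕ):ℝ) + 1 = (((i:ℕ) + 1 : ℕ) : ℝ) := by push_cast; ring
    _ ≤ (T:ℝ) := by exact_mod_cast this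

lemma key_identity (lam : ℝ) (hlam0 : 0 < lam) (hlam1 : lam < 1)
    (φ₁ φ₂ : ℝ → ℝ) (T : ℕ) (hT : 1 ≤ T) :
    ((T : ℝ) ^ 2)⁻¹ *
        ∑ i : Fin T, ∑ j : Fin T,
          φ₁ (((i : ℕ) + 1 : ℝ) / T) * CTmatrix T lam i j *
            φ₂ (((j : ℕ) + 1 : ℝ) / T)
    = (1/lam^2) * ((T:ℝ)⁻¹ * ∑ i : Fin T,
          (if ((i:ℕ)+1:ℝ)/T ≤ lam then φ₁ (((i:ℕ)+1:ℝ)/T) * φ₂ (((i:ℕ)+1:ℝ)/T) else 0))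
      - (1/lam^3) * ((T:ℝ)⁻¹ * ∑ i : Fin T,
          (if ((i:ℕ)+1:ℝ)/T ≤ lam then φ₁ (((i:ℕ)+1:ℝ)/T) else 0))
        * ((T:ℝ)⁻¹ * ∑ i : Fin T,
          (if ((i:ℕ)+1:ℝ)/T ≤ lam then φ₂ (((i:ℕ)+1:ℝ)/T) else 0))
      + (1/(1-lam)^2) * (((T:ℝ)⁻¹ * ∑ i : Fin T, φ₁ (((i:ℕ)+1:ℝ)/T) * φ₂ (((i:ℕ)+1:ℝ)/T))
          - ((T:ℝ)⁻¹ * ∑ i : Fin T,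
            (if ((i:ℕ)+1:ℝ)/T ≤ lam then φ₁ (((i:ℕ)+1:ℝ)/T) * φ₂ (((i:ℕ)+1:ℝ)/T) else 0)))
      - (1/(1-lam)^3) * (((T:ℝ)⁻¹ * ∑ i : Fin T, φ₁ (((i:ℕ)+1:ℝ)/T))
          - ((T:ℝ)⁻¹ * ∑ i : Fin T,
            (if ((i:ℕ)+1:ℝ)/T ≤ lam then φ₁ (((i:ℕ)+1:ℝ)/T) else 0)))
        * (((T:ℝ)⁻¹ * ∑ i : Fin T, φ₂ (((i:ℕ)+1:ℝ)/T))
          - ((T:ℝ)⁻¹ * ∑ i : Fin T,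
            (if ((i:ℕ)+1:ℝ)/T ≤ lam then φ₂ (((i:ℕ)+1:ℝ)/T) else 0))) := by
  have hTne : (T:ℝ) ≠ 0 := by
    have : (0:ℝ) < T := by exact_mod_cast hT
    linarith
  have hlamne : lam ≠ 0 := ne_of_gt hlam0
  have h1lamne : (1:ℝ) - lam ≠ 0 := by linarith
  set x : Fin T → ℝ := fun i => ((i:ℕ)+1:ℝ)/T with hx
  -- pointwise decomposition
  have hpt : ∀ i j : Fin T,
      φ₁ (x i) * CTmatrix T lam i j * φ₂ (x j)
      = (1/lam^2) * ((if x i ≤ lam then φ₁ (x i) else 0)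
            * ((if i = j then (T:ℝ) else 0) - 1/lam)
            * (if x j ≤ lam then φ₂ (x j) else 0))
        + (1/(1-lam)^2) * ((if lam < x i then φ₁ (x i) else 0)
            * ((if i = j then (T:ℝ) else 0) - 1/(1-lam))
            * (if lam < x j then φ₂ (x j) else 0)) := by
    intro i j
    have hxi : x i = ((i:ℕ)+1:ℝ)/T := rfl
    have hxj : x j = ((j:ℕ)+1:ℝ)/T := rfl
    rw [hxi, hxj]
    by_cases hi : ((i:ℕ)+1:ℝ)/T ≤ lam <;> by_cases hj : ((j:ℕ)+1:ℝ)/T ≤ lam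
    · simp [CTmatrix, hi, hj, not_lt.mpr hi, not_lt.mpr hj]
      try ring
    · simp [CTmatrix, hi, hj, not_lt.mpr hi, not_le.mp hj]
      try ring
    · simp [CTmatrix, hi, hj, not_le.mp hi, not_lt.mpr hj]
      try ring
    · simp [CTmatrix, hi, hj, not_le.mp hi, not_le.mp hj]
      try ring
  have hsum1 : ∑ i : Fin T, ∑ j : Fin T, φ₁ (x i) * CTmatrix T lam i j * φ₂ (x j)
      = (1/lam^2) * ((T:ℝ) * (∑ i : Fin T, (if x i ≤ lam then φ₁ (x i) else 0) * (if x i ≤ lam then φ₂ (x i) else 0))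
          - (1/lam) * (∑ i : Fin T, (if x i ≤ lam then φ₁ (x i) else 0))
            * (∑ j : Fin T, (if x j ≤ lam then φ₂ (x j) else 0)))
        + (1/(1-lam)^2) * ((T:ℝ) * (∑ i : Fin T, (if lam < x i then φ₁ (x i) else 0) * (if lam < x i then φ₂ (x i) else 0))
          - (1/(1-lam)) * (∑ i : Fin T, (if lam < x i then φ₁ (x i) else 0))
            * (∑ j : Fin T, (if lam < x j then φ₂ (x j) else 0))) := by
    rw [← double_sum_delta (fun i => if x i ≤ lam then φ₁ (x i) else 0)
        (fun i => if x i ≤ lam then φ₂ (x i) else 0) (1/lam) (T:ℝ),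
      ← double_sum_delta (fun i => if lam < x i then φ₁ (x i) else 0)
        (fun i => if lam < x i then φ₂ (x i) else 0) (1/(1-lam)) (T:ℝ),
      Finset.mul_sum, Finset.mul_sum, ← Finset.sum_add_distrib]
    apply Finset.sum_congr rfl
    intro i _
    rw [Finset.mul_sum, Finset.mul_sum, ← Finset.sum_add_distrib]
    exact Finset.sum_congr rfl (fun j _ => hpt i j)
  -- merge ite products
  have hmerge : ∀ (g h : ℝ → ℝ) (P : Fin T → Prop) [DecidablePred P],
      ∑ i : Fin T, (if P i then g (x i) else 0) * (if P i then h (x i) else 0)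
      = ∑ i : Fin T, (if P i then g (x i) * h (x i) else 0) := by
    intro g h P _
    apply Finset.sum_congr rfl
    intro i _
    split_ifs <;> ring
  have hupper : ∀ g : ℝ → ℝ,
      ∑ i : Fin T, (if lam < x i then g (x i) else 0)
      = (∑ i : Fin T, g (x i)) - ∑ i : Fin T, (if x i ≤ lam then g (x i) else 0) := by
    intro g
    rw [← Finset.sum_sub_distrib]
    apply Finset.sum_congr rfl
    intro i _
    rcases le_or_gt (x i) lam with h | h
    · rw [if_neg (not_lt.mpr h), if_pos h]; ring
    · rw [if_pos h, if_neg (not_le.mpr h)]; ring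
  rw [hsum1, hmerge φ₁ φ₂ (fun i => x i ≤ lam), hmerge φ₁ φ₂ (fun i => lam < x i),
    hupper (fun r => φ₁ r * φ₂ r), hupper φ₁, hupper φ₂]
  simp only [hx]
  field_simp
  ring

end Aux

/-- convergence of the quadratic form (1/T²) 𝛗₁ᵀ C_T 𝛗₂ to the
limiting expression, which equals ∫₀¹ φ̃₁(r;λ) φ̃₂(r;λ) dr. -/
theorem CT_quadratic_form_limit (lam : ℝ) (hlam0 : 0 < lam) (hlam1 : lam < 1)
    (φ₁ φ₂ : ℝ → ℝ)
    (hc1 : ContinuousOn φ₁ (Set.Icc 0 1)) (hc2 : ContinuousOn φ₂ (Set.Icc 0 1)) :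
    Tendsto
      (fun T : ℕ =>
        (((T : ℝ) ^ 2)⁻¹) *
          ∑ i : Fin T, ∑ j : Fin T,
            φ₁ (((i : ℕ) + 1 : ℝ) / T) * CTmatrix T lam i j *
              φ₂ (((j : ℕ) + 1 : ℝ) / T))
      atTop
      (nhds
        ((1 / lam ^ 2) * (∫ r in (0:ℝ)..lam, φ₁ r * φ₂ r)
          - (1 / lam ^ 3) * (∫ r in (0:ℝ)..lam, φ₁ r) * (∫ r in (0:ℝ)..lam, φ₂ r)
          + (1 / (1 - lam) ^ 2) * (∫ r in lam..(1:ℝ), φ₁ r * φ₂ r)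
          - (1 / (1 - lam) ^ 3) * (∫ r in lam..(1:ℝ), φ₁ r) *
              (∫ r in lam..(1:ℝ), φ₂ r))) ∧
    ((1 / lam ^ 2) * (∫ r in (0:ℝ)..lam, φ₁ r * φ₂ r)
        - (1 / lam ^ 3) * (∫ r in (0:ℝ)..lam, φ₁ r) * (∫ r in (0:ℝ)..lam, φ₂ r)
        + (1 / (1 - lam) ^ 2) * (∫ r in lam..(1:ℝ), φ₁ r * φ₂ r)
        - (1 / (1 - lam) ^ 3) * (∫ r in lam..(1:ℝ), φ₁ r) *
            (∫ r in lam..(1:ℝ), φ₂ r)) =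
      ∫ r in (0:ℝ)..1,
        (if r ≤ lam then
            (1 / lam) * (φ₁ r - (1 / lam) * ∫ s in (0:ℝ)..lam, φ₁ s)
          else
            -((1 / (1 - lam)) * (φ₁ r - (1 / (1 - lam)) * ∫ s in lam..(1:ℝ), φ₁ s))) *
        (if r ≤ lam then
            (1 / lam) * (φ₂ r - (1 / lam) * ∫ s in (0:ℝ)..lam, φ₂ s)
          else
            -((1 / (1 - lam)) * (φ₂ r - (1 / (1 - lam)) * ∫ s in lam..(1:ℝ), φ₂ s))) := by
  have h1lam0 : (0:ℝ) < 1 - lam := by linarith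
  have hlamne : lam ≠ 0 := ne_of_gt hlam0
  have h1lamne : (1:ℝ) - lam ≠ 0 := ne_of_gt h1lam0
  have hc12 : ContinuousOn (fun r => φ₁ r * φ₂ r) (Set.Icc 0 1) := hc1.mul hc2
  have hint : ∀ (f : ℝ → ℝ), ContinuousOn f (Set.Icc 0 1) →
      ∀ a b : ℝ, a ∈ Set.Icc (0:ℝ) 1 → b ∈ Set.Icc (0:ℝ) 1 →
      IntervalIntegrable f volume a b :=
    fun f hf a b ha hb => (hf.mono (Set.uIcc_subset_Icc ha hb)).intervalIntegrable
  have hlmem : lam ∈ Set.Icc (0:ℝ) 1 := ⟨le_of_lt hlam0, le_of_lt hlam1⟩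
  have h0mem : (0:ℝ) ∈ Set.Icc (0:ℝ) 1 := by norm_num
  have h1mem : (1:ℝ) ∈ Set.Icc (0:ℝ) 1 := by norm_num
  have hsplit : ∀ f : ℝ → ℝ, ContinuousOn f (Set.Icc 0 1) →
      (∫ r in lam..(1:ℝ), f r) = (∫ r in (0:ℝ)..1, f r) - ∫ r in (0:ℝ)..lam, f r := by
    intro f hf
    rw [← intervalIntegral.integral_add_adjacent_intervals
      (hint f hf 0 lam h0mem hlmem) (hint f hf lam 1 hlmem h1mem)]
    ring
  constructor
  · -- Part 1: convergence
    have hT1 := riemann_cutoff φ₁ hc1 lam hlam0 (le_of_lt hlam1)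
    have hT2 := riemann_cutoff φ₂ hc2 lam hlam0 (le_of_lt hlam1)
    have hT12 := riemann_cutoff (fun r => φ₁ r * φ₂ r) hc12 lam hlam0 (le_of_lt hlam1)
    have hS1 := STot_tendsto φ₁ hc1
    have hS2 := STot_tendsto φ₂ hc2
    have hS12 := STot_tendsto (fun r => φ₁ r * φ₂ r) hc12
    have hcomb := (((hT12.const_mul (1/lam^2)).sub
        ((hT1.const_mul (1/lam^3)).mul hT2)).add
        ((hS12.sub hT12).const_mul (1/(1-lam)^2))).sub
        (((hS1.sub hT1).mul (hS2.sub hT2)).const_mul (1/(1-lam)^3))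
    have heq : ∀ᶠ T : ℕ in atTop,
        (fun T : ℕ =>
          (1/lam^2) * ((T:ℝ)⁻¹ * ∑ i : Fin T,
              (if ((i:ℕ)+1:ℝ)/T ≤ lam then φ₁ (((i:ℕ)+1:ℝ)/T) * φ₂ (((i:ℕ)+1:ℝ)/T) else 0))
            - (1/lam^3) * ((T:ℝ)⁻¹ * ∑ i : Fin T,
                (if ((i:ℕ)+1:ℝ)/T ≤ lam then φ₁ (((i:ℕ)+1:ℝ)/T) else 0))
              * ((T:ℝ)⁻¹ * ∑ i : Fin T,
                (if ((i:ℕ)+1:ℝ)/T ≤ lam then φ₂ (((i:ℕ)+1:ℝ)/T) else 0))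
            + (1/(1-lam)^2) * (((T:ℝ)⁻¹ * ∑ i : Fin T, φ₁ (((i:ℕ)+1:ℝ)/T) * φ₂ (((i:ℕ)+1:ℝ)/T))
                - ((T:ℝ)⁻¹ * ∑ i : Fin T,
                  (if ((i:ℕ)+1:ℝ)/T ≤ lam then φ₁ (((i:ℕ)+1:ℝ)/T) * φ₂ (((i:ℕ)+1:ℝ)/T) else 0)))
            - (1/(1-lam)^3) * (((T:ℝ)⁻¹ * ∑ i : Fin T, φ₁ (((i:ℕ)+1:ℝ)/T))
                - ((T:ℝ)⁻¹ * ∑ i : Fin T,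
                  (if ((i:ℕ)+1:ℝ)/T ≤ lam then φ₁ (((i:ℕ)+1:ℝ)/T) else 0)))
              * (((T:ℝ)⁻¹ * ∑ i : Fin T, φ₂ (((i:ℕ)+1:ℝ)/T))
                - ((T:ℝ)⁻¹ * ∑ i : Fin T,
                  (if ((i:ℕ)+1:ℝ)/T ≤ lam then φ₂ (((i:ℕ)+1:ℝ)/T) else 0)))) T
        = (fun T : ℕ =>
            (((T : ℝ) ^ 2)⁻¹) *
              ∑ i : Fin T, ∑ j : Fin T,
                φ₁ (((i : ℕ) + 1 : ℝ) / T) * CTmatrix T lam i j *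
                  φ₂ (((j : ℕ) + 1 : ℝ) / T)) T := by
      filter_upwards [eventually_ge_atTop 1] with T hT
      exact (key_identity lam hlam0 hlam1 φ₁ φ₂ T hT).symm
    have hcomb2 := hcomb.congr (f₂ := fun T : ℕ =>
          (1/lam^2) * ((T:ℝ)⁻¹ * ∑ i : Fin T,
              (if ((i:ℕ)+1:ℝ)/T ≤ lam then φ₁ (((i:ℕ)+1:ℝ)/T) * φ₂ (((i:ℕ)+1:ℝ)/T) else 0))
            - (1/lam^3) * ((T:ℝ)⁻¹ * ∑ i : Fin T,
                (if ((i:ℕ)+1:ℝ)/T ≤ lam then φ₁ (((i:ℕ)+1:ℝ)/T) else 0))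
              * ((T:ℝ)⁻¹ * ∑ i : Fin T,
                (if ((i:ℕ)+1:ℝ)/T ≤ lam then φ₂ (((i:ℕ)+1:ℝ)/T) else 0))
            + (1/(1-lam)^2) * (((T:ℝ)⁻¹ * ∑ i : Fin T, φ₁ (((i:ℕ)+1:ℝ)/T) * φ₂ (((i:ℕ)+1:ℝ)/T))
                - ((T:ℝ)⁻¹ * ∑ i : Fin T,
                  (if ((i:ℕ)+1:ℝ)/T ≤ lam then φ₁ (((i:ℕ)+1:ℝ)/T) * φ₂ (((i:ℕ)+1:ℝ)/T) else 0)))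
            - (1/(1-lam)^3) * (((T:ℝ)⁻¹ * ∑ i : Fin T, φ₁ (((i:ℕ)+1:ℝ)/T))
                - ((T:ℝ)⁻¹ * ∑ i : Fin T,
                  (if ((i:ℕ)+1:ℝ)/T ≤ lam then φ₁ (((i:ℕ)+1:ℝ)/T) else 0)))
              * (((T:ℝ)⁻¹ * ∑ i : Fin T, φ₂ (((i:ℕ)+1:ℝ)/T))
                - ((T:ℝ)⁻¹ * ∑ i : Fin T,
                  (if ((i:ℕ)+1:ℝ)/T ≤ lam then φ₂ (((i:ℕ)+1:ℝ)/T) else 0))))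
      (fun T => by beta_reduce; ring)
    have final := Tendsto.congr' heq hcomb2
    convert final using 2
    rw [hsplit φ₁ hc1, hsplit φ₂ hc2, hsplit (fun r => φ₁ r * φ₂ r) hc12]
    ring
  · -- Part 2: integral identity
    have hg1eq : ∫ r in (0:ℝ)..lam,
        (if r ≤ lam then (1 / lam) * (φ₁ r - (1 / lam) * ∫ s in (0:ℝ)..lam, φ₁ s)
          else -((1 / (1 - lam)) * (φ₁ r - (1 / (1 - lam)) * ∫ s in lam..(1:ℝ), φ₁ s))) *
        (if r ≤ lam then (1 / lam) * (φ₂ r - (1 / lam) * ∫ s in (0:ℝ)..lam, φ₂ s)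
          else -((1 / (1 - lam)) * (φ₂ r - (1 / (1 - lam)) * ∫ s in lam..(1:ℝ), φ₂ s)))
        = ∫ r in (0:ℝ)..lam,
          ((1 / lam) * (φ₁ r - (1 / lam) * ∫ s in (0:ℝ)..lam, φ₁ s)) *
          ((1 / lam) * (φ₂ r - (1 / lam) * ∫ s in (0:ℝ)..lam, φ₂ s)) := by
      apply intervalIntegral.integral_congr
      intro r hr
      rw [Set.uIcc_of_le (le_of_lt hlam0)] at hr
      simp only [if_pos hr.2]
    have hg2eq : ∫ r in lam..(1:ℝ),
        (if r ≤ lam then (1 / lam) * (φ₁ r - (1 / lam) * ∫ s in (0:ℝ)..lam, φ₁ s)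
          else -((1 / (1 - lam)) * (φ₁ r - (1 / (1 - lam)) * ∫ s in lam..(1:ℝ), φ₁ s))) *
        (if r ≤ lam then (1 / lam) * (φ₂ r - (1 / lam) * ∫ s in (0:ℝ)..lam, φ₂ s)
          else -((1 / (1 - lam)) * (φ₂ r - (1 / (1 - lam)) * ∫ s in lam..(1:ℝ), φ₂ s)))
        = ∫ r in lam..(1:ℝ),
          (-((1 / (1 - lam)) * (φ₁ r - (1 / (1 - lam)) * ∫ s in lam..(1:ℝ), φ₁ s))) *
          (-((1 / (1 - lam)) * (φ₂ r - (1 / (1 - lam)) * ∫ s in lam..(1:ℝ), φ₂ s))) := by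
      apply intervalIntegral.integral_congr_ae
      apply Filter.Eventually.of_forall
      intro r hr
      rw [Set.uIoc_of_le (le_of_lt hlam1)] at hr
      simp only [if_neg (not_le.mpr hr.1)]
    -- integrability of the piecewise integrand on the two pieces
    have hcA : ContinuousOn (fun r =>
        ((1 / lam) * (φ₁ r - (1 / lam) * ∫ s in (0:ℝ)..lam, φ₁ s)) *
        ((1 / lam) * (φ₂ r - (1 / lam) * ∫ s in (0:ℝ)..lam, φ₂ s))) (Set.Icc 0 1) :=
      ((continuousOn_const.mul (hc1.sub continuousOn_const)).mul
        (continuousOn_const.mul (hc2.sub continuousOn_const)))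
    have hcB : ContinuousOn (fun r =>
        (-((1 / (1 - lam)) * (φ₁ r - (1 / (1 - lam)) * ∫ s in lam..(1:ℝ), φ₁ s))) *
        (-((1 / (1 - lam)) * (φ₂ r - (1 / (1 - lam)) * ∫ s in lam..(1:ℝ), φ₂ s)))) (Set.Icc 0 1) :=
      ((continuousOn_const.mul (hc1.sub continuousOn_const)).neg.mul
        (continuousOn_const.mul (hc2.sub continuousOn_const)).neg)
    have hiA : IntervalIntegrable (fun r =>
        (if r ≤ lam then (1 / lam) * (φ₁ r - (1 / lam) * ∫ s in (0:ℝ)..lam, φ₁ s)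
          else -((1 / (1 - lam)) * (φ₁ r - (1 / (1 - lam)) * ∫ s in lam..(1:ℝ), φ₁ s))) *
        (if r ≤ lam then (1 / lam) * (φ₂ r - (1 / lam) * ∫ s in (0:ℝ)..lam, φ₂ s)
          else -((1 / (1 - lam)) * (φ₂ r - (1 / (1 - lam)) * ∫ s in lam..(1:ℝ), φ₂ s))))
        volume 0 lam := by
      apply (hint _ hcA 0 lam h0mem hlmem).congr_ae
      apply MeasureTheory.ae_restrict_of_forall_mem measurableSet_uIoc
      intro r hr
      rw [Set.uIoc_of_le (le_of_lt hlam0)] at hr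
      simp only [if_pos hr.2]
    have hiB : IntervalIntegrable (fun r =>
        (if r ≤ lam then (1 / lam) * (φ₁ r - (1 / lam) * ∫ s in (0:ℝ)..lam, φ₁ s)
          else -((1 / (1 - lam)) * (φ₁ r - (1 / (1 - lam)) * ∫ s in lam..(1:ℝ), φ₁ s))) *
        (if r ≤ lam then (1 / lam) * (φ₂ r - (1 / lam) * ∫ s in (0:ℝ)..lam, φ₂ s)
          else -((1 / (1 - lam)) * (φ₂ r - (1 / (1 - lam)) * ∫ s in lam..(1:ℝ), φ₂ s))))
        volume lam 1 := by
      apply (hint _ hcB lam 1 hlmem h1mem).congr_ae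
      apply MeasureTheory.ae_restrict_of_forall_mem measurableSet_uIoc
      intro r hr
      rw [Set.uIoc_of_le (le_of_lt hlam1)] at hr
      simp only [if_neg (not_le.mpr hr.1)]
    rw [← intervalIntegral.integral_add_adjacent_intervals hiA hiB, hg1eq, hg2eq]
    -- expand the two integrals
    have i12a := hint (fun r => φ₁ r * φ₂ r) hc12 0 lam h0mem hlmem
    have i1a := hint φ₁ hc1 0 lam h0mem hlmem
    have i2a := hint φ₂ hc2 0 lam h0mem hlmem
    have i12b := hint (fun r => φ₁ r * φ₂ r) hc12 lam 1 hlmem h1mem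
    have i1b := hint φ₁ hc1 lam 1 hlmem h1mem
    have i2b := hint φ₂ hc2 lam 1 hlmem h1mem
    have e1 : ∫ r in (0:ℝ)..lam,
        ((1 / lam) * (φ₁ r - (1 / lam) * ∫ s in (0:ℝ)..lam, φ₁ s)) *
        ((1 / lam) * (φ₂ r - (1 / lam) * ∫ s in (0:ℝ)..lam, φ₂ s))
        = (1/lam^2) * ((∫ r in (0:ℝ)..lam, φ₁ r * φ₂ r)
            - ((1 / lam) * ∫ s in (0:ℝ)..lam, φ₂ s) * (∫ r in (0:ℝ)..lam, φ₁ r)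
            - ((1 / lam) * ∫ s in (0:ℝ)..lam, φ₁ s) * (∫ r in (0:ℝ)..lam, φ₂ r)
            + (lam - 0) * (((1 / lam) * ∫ s in (0:ℝ)..lam, φ₁ s) * ((1 / lam) * ∫ s in (0:ℝ)..lam, φ₂ s))) := by
      have h1 : (fun r => ((1 / lam) * (φ₁ r - (1 / lam) * ∫ s in (0:ℝ)..lam, φ₁ s)) *
          ((1 / lam) * (φ₂ r - (1 / lam) * ∫ s in (0:ℝ)..lam, φ₂ s)))
          = fun r => (1/lam^2) * ((φ₁ r * φ₂ r
            - ((1 / lam) * ∫ s in (0:ℝ)..lam, φ₂ s) * φ₁ r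
            - ((1 / lam) * ∫ s in (0:ℝ)..lam, φ₁ s) * φ₂ r)
            + ((1 / lam) * ∫ s in (0:ℝ)..lam, φ₁ s) * ((1 / lam) * ∫ s in (0:ℝ)..lam, φ₂ s)) := by
        funext r
        field_simp
        ring
      rw [h1, intervalIntegral.integral_const_mul]
      rw [intervalIntegral.integral_add ((i12a.sub (i1a.const_mul _)).sub (i2a.const_mul _))
        intervalIntegrable_const]
      rw [intervalIntegral.integral_sub (i12a.sub (i1a.const_mul _)) (i2a.const_mul _)]
      rw [intervalIntegral.integral_sub i12a (i1a.const_mul _)]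
      rw [intervalIntegral.integral_const_mul, intervalIntegral.integral_const_mul,
        intervalIntegral.integral_const, smul_eq_mul]
      try ring
    have e2 : ∫ r in lam..(1:ℝ),
        (-((1 / (1 - lam)) * (φ₁ r - (1 / (1 - lam)) * ∫ s in lam..(1:ℝ), φ₁ s))) *
        (-((1 / (1 - lam)) * (φ₂ r - (1 / (1 - lam)) * ∫ s in lam..(1:ℝ), φ₂ s)))
        = (1/(1-lam)^2) * ((∫ r in lam..(1:ℝ), φ₁ r * φ₂ r)
            - ((1 / (1-lam)) * ∫ s in lam..(1:ℝ), φ₂ s) * (∫ r in lam..(1:ℝ), φ₁ r)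
            - ((1 / (1-lam)) * ∫ s in lam..(1:ℝ), φ₁ s) * (∫ r in lam..(1:ℝ), φ₂ r)
            + ((1:ℝ) - lam) * (((1 / (1-lam)) * ∫ s in lam..(1:ℝ), φ₁ s) * ((1 / (1-lam)) * ∫ s in lam..(1:ℝ), φ₂ s))) := by
      have h1 : (fun r => (-((1 / (1 - lam)) * (φ₁ r - (1 / (1 - lam)) * ∫ s in lam..(1:ℝ), φ₁ s))) *
          (-((1 / (1 - lam)) * (φ₂ r - (1 / (1 - lam)) * ∫ s in lam..(1:ℝ), φ₂ s))))
          = fun r => (1/(1-lam)^2) * ((φ₁ r * φ₂ r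
            - ((1 / (1-lam)) * ∫ s in lam..(1:ℝ), φ₂ s) * φ₁ r
            - ((1 / (1-lam)) * ∫ s in lam..(1:ℝ), φ₁ s) * φ₂ r)
            + ((1 / (1-lam)) * ∫ s in lam..(1:ℝ), φ₁ s) * ((1 / (1-lam)) * ∫ s in lam..(1:ℝ), φ₂ s)) := by
        funext r
        field_simp
        ring
      rw [h1, intervalIntegral.integral_const_mul]
      rw [intervalIntegral.integral_add ((i12b.sub (i1b.const_mul _)).sub (i2b.const_mul _))
        intervalIntegrable_const]
      rw [intervalIntegral.integral_sub (i12b.sub (i1b.const_mul _)) (i2b.const_mul _)]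
      rw [intervalIntegral.integral_sub i12b (i1b.const_mul _)]
      rw [intervalIntegral.integral_const_mul, intervalIntegral.integral_const_mul,
        intervalIntegral.integral_const, smul_eq_mul]
      try ring
    rw [e1, e2]
    field_simp
    ring
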